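/- Let g : ℝ^m → ℝ be a C^{1,α*} function for some α* ∈ (0,1], with the property that g(x) = 0 implies ∇g(x) = 0 for every x ∈ ℝ^m. Then for every x ∈ ℝ^m, |∇g(x)| ≤ 2·max{1, [∇g]_{C^{0,α*}}} · |g(x)|^{α*/(1+α*)}. -/

import Mathlib

open Real Set Metric

theorem aux1 {m : ℕ} {αs : ℝ} (hαs : 0 < αs ∧ αs ≤ 1)
    (g : EuclideanSpace ℝ (Fin m) → ℝ) (hg : ContDiff ℝ 1 g) {M : ℝ} (hM : 1 ≤ M)
    (hHolder : ∀ x y, ‖fderiv ℝ g x - fderiv ℝ g y‖ ≤ M * ‖x - y‖ ^ αs)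
    (htouch : ∀ x, g x = 0 → fderiv ℝ g x = 0)
    (x : EuclideanSpace ℝ (Fin m)) (hgx : 0 ≤ g x) :
    ‖fderiv ℝ g x‖ ≤ 2 * M * (g x) ^ (αs / (1 + αs)) := by
  have hM0 : (0:ℝ) < M := lt_of_lt_of_le one_pos hM
  have hα := hαs.1
  rcases eq_or_lt_of_le hgx with h0 | hpos
  · rw [htouch x h0.symm]
    simp only [norm_zero]
    positivity
  rcases eq_or_lt_of_le (norm_nonneg (fderiv ℝ g x)) with hD | hD
  · rw [← hD]; positivity
  set f := fderiv ℝ g x with hf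
  set D := ‖f‖ with hDdef
  -- Riesz vector
  set w : EuclideanSpace ℝ (Fin m) := (InnerProductSpace.toDual ℝ (EuclideanSpace ℝ (Fin m))).symm f with hw
  have hwnorm : ‖w‖ = D := by rw [hw]; exact LinearIsometryEquiv.norm_map _ f
  set v : EuclideanSpace ℝ (Fin m) := D⁻¹ • w with hv
  have hvnorm : ‖v‖ = 1 := by
    rw [hv, norm_smul, hwnorm, norm_inv, Real.norm_of_nonneg hD.le,
      inv_mul_cancel₀ (ne_of_gt hD)]
  have hfv : f v = D := by
    rw [hv, map_smul, smul_eq_mul]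
    have h1 : f w = @inner ℝ _ _ w w := by
      rw [hw]
      exact (InnerProductSpace.toDual_symm_apply).symm
    rw [h1, real_inner_self_eq_norm_sq, hwnorm]
    field_simp
  set E := D / (2 * M) with hE
  have hE0 : 0 < E := by positivity
  set t0 : ℝ := E ^ (αs⁻¹) with ht0
  have ht00 : 0 < t0 := Real.rpow_pos_of_pos hE0 _
  have ht0pow : t0 ^ αs = E := by
    rw [ht0, ← Real.rpow_mul hE0.le, inv_mul_cancel₀ hα.ne', Real.rpow_one]
  clear_value w v f D E t0
  have hdg : Differentiable ℝ g := hg.differentiable one_ne_zero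
  -- Hölder bound with distance from x
  have hstep : ∀ t ∈ Icc (0:ℝ) t0, ‖fderiv ℝ g (x - t • v) - f‖ ≤ M * t0 ^ αs := by
    intro t ht
    have h1 : ‖(x - t • v) - x‖ = t := by
      rw [sub_sub_cancel_left, norm_neg, norm_smul, hvnorm, mul_one,
        Real.norm_of_nonneg ht.1]
    calc ‖fderiv ℝ g (x - t • v) - f‖ ≤ M * ‖(x - t • v) - x‖ ^ αs := by rw [hf]; exact hHolder _ _
      _ = M * t ^ αs := by rw [h1]
      _ ≤ M * t0 ^ αs :=
        mul_le_mul_of_nonneg_left (Real.rpow_le_rpow ht.1 ht.2 hα.le) hM0.le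
  by_cases hz : ∃ t ∈ Icc (0:ℝ) t0, g (x - t • v) = 0
  · -- zero on the segment: contradiction with D > 0
    exfalso
    obtain ⟨t, ht, hgt⟩ := hz
    have h0 : fderiv ℝ g (x - t • v) = 0 := htouch _ hgt
    have := hstep t ht
    rw [h0, zero_sub, norm_neg, ht0pow, hE, ← hDdef] at this
    -- D ≤ M * (D / (2*M)) = D/2, contradiction
    have : D ≤ D / 2 := by
      calc D ≤ M * (D / (2 * M)) := this
        _ = D / 2 := by field_simp
    linarith
  · push_neg at hz
    -- no zero: g (x - t0 • v) > 0
    have hcont : ContinuousOn (fun t : ℝ => g (x - t • v)) (Icc 0 t0) :=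
      (hdg.continuous.comp (continuous_const.sub (continuous_id.smul continuous_const))).continuousOn
    have hgy0 : 0 < g (x - t0 • v) := by
      rcases lt_or_ge 0 (g (x - t0 • v)) with h | h
      · exact h
      · exfalso
        have hmem : (0:ℝ) ∈ Icc (g (x - t0 • v)) (g (x - (0:ℝ) • v)) := by
          constructor
          · exact h
          · simp only [zero_smul, sub_zero]
            exact hpos.le
        obtain ⟨t, ht, hgt⟩ := intermediate_value_Icc' ht00.le hcont hmem
        exact hz t ht hgt
    -- mean value estimate for h = g - f
    have hdiff : ∀ y ∈ closedBall x t0, DifferentiableAt ℝ (fun y => g y - f y) y :=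
      fun y _ => (hdg y).sub f.differentiableAt
    have hbound : ∀ y ∈ closedBall x t0, ‖fderiv ℝ (fun y => g y - f y) y‖ ≤ M * t0 ^ αs := by
      intro y hy
      rw [fderiv_fun_sub (hdg y) f.differentiableAt, f.fderiv]
      have h1 : ‖y - x‖ ≤ t0 := by rwa [← mem_closedBall_iff_norm]
      calc ‖fderiv ℝ g y - f‖ ≤ M * ‖y - x‖ ^ αs := by rw [hf]; exact hHolder _ _
        _ ≤ M * t0 ^ αs :=
          mul_le_mul_of_nonneg_left (Real.rpow_le_rpow (norm_nonneg _) h1 hα.le) hM0.le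
    have hy0mem : x - t0 • v ∈ closedBall x t0 := by
      rw [mem_closedBall_iff_norm, sub_sub_cancel_left, norm_neg, norm_smul, hvnorm,
        mul_one, Real.norm_of_nonneg ht00.le]
    have key := Convex.norm_image_sub_le_of_norm_fderiv_le hdiff hbound
      (convex_closedBall x t0) (mem_closedBall_self ht00.le) hy0mem
    have hnorm1 : ‖(x - t0 • v) - x‖ = t0 := by
      rw [sub_sub_cancel_left, norm_neg, norm_smul, hvnorm, mul_one,
        Real.norm_of_nonneg ht00.le]
    have hfdiff : f (x - t0 • v) - f x = -(t0 * D) := by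
      rw [map_sub, map_smul, smul_eq_mul, hfv]; ring
    rw [hnorm1, ht0pow] at key
    have hME : M * E = D / 2 := by rw [hE]; field_simp
    rw [hME] at key
    -- g (x - t0 • v) ≤ g x - D * t0 / 2
    have habs : |g (x - t0 • v) - g x + t0 * D| ≤ D / 2 * t0 := by
      have : (g (x - t0 • v) - f (x - t0 • v)) - (g x - f x)
          = g (x - t0 • v) - g x + t0 * D := by
        have : f (x - t0 • v) = f x - t0 * D := by
          have := hfdiff; linarith [hfdiff]
        rw [this]; ring
      rw [this] at key
      exact key
    have hineq : D * t0 / 2 < g x := by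
      have h1 := abs_le.mp habs
      nlinarith [hgy0, h1.1, h1.2]
    -- algebra: D = 2 M E, t0 = E^(1/αs)
    have hDE : D = 2 * M * E := by rw [hE]; field_simp
    have hkey2 : M * E ^ ((1 + αs) / αs) < g x := by
      have hEpow : E ^ ((1 + αs) / αs) = E * t0 := by
        have hexp : (1 + αs) / αs = 1 + αs⁻¹ := by field_simp; ring
        rw [hexp, Real.rpow_add hE0, Real.rpow_one, ht0]
      rw [hEpow]
      calc M * (E * t0) = D * t0 / 2 := by rw [hDE]; ring
        _ < g x := hineq
    have hEpow2 : E ^ ((1 + αs) / αs) < g x / M := by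
      rw [lt_div_iff₀ hM0]
      linarith [hkey2]
    have hElt : E < (g x / M) ^ (αs / (1 + αs)) := by
      have h1 : (E ^ ((1 + αs) / αs)) ^ (αs / (1 + αs)) < (g x / M) ^ (αs / (1 + αs)) :=
        Real.rpow_lt_rpow (Real.rpow_nonneg hE0.le _) hEpow2 (by positivity)
      rwa [← Real.rpow_mul hE0.le, div_mul_div_comm, mul_comm,
        div_self (by positivity), Real.rpow_one] at h1
    have hfin : (g x / M) ^ (αs / (1 + αs)) ≤ g x ^ (αs / (1 + αs)) := by
      rw [Real.div_rpow hpos.le hM0.le]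
      exact div_le_self (Real.rpow_nonneg hpos.le _)
        (Real.one_le_rpow hM (by positivity))
    refine le_of_lt ?_
    calc D = 2 * M * E := hDE
      _ < 2 * M * (g x / M) ^ (αs / (1 + αs)) := by
          exact (mul_lt_mul_iff_right₀ (by positivity)).mpr hElt
      _ ≤ 2 * M * g x ^ (αs / (1 + αs)) :=
          mul_le_mul_of_nonneg_left hfin (by positivity)

theorem stmt1 {m : ℕ} {αs : ℝ} (hαs : 0 < αs ∧ αs ≤ 1)
    (g : EuclideanSpace ℝ (Fin m) → ℝ) (hg : ContDiff ℝ 1 g) {H : ℝ} (hH : 0 ≤ H)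
    (hHolder : ∀ x y, ‖fderiv ℝ g x - fderiv ℝ g y‖ ≤ H * ‖x - y‖ ^ αs)
    (htouch : ∀ x, g x = 0 → fderiv ℝ g x = 0) :
    ∀ x, ‖fderiv ℝ g x‖ ≤ 2 * max 1 H * |g x| ^ (αs / (1 + αs)) := by
  intro x
  set M := max 1 H with hMdef
  have hM : 1 ≤ M := le_max_left _ _
  have hHM : H ≤ M := le_max_right _ _
  have hHolder' : ∀ x y, ‖fderiv ℝ g x - fderiv ℝ g y‖ ≤ M * ‖x - y‖ ^ αs := by
    intro a b
    exact le_trans (hHolder a b)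
      (mul_le_mul_of_nonneg_right hHM (Real.rpow_nonneg (norm_nonneg _) _))
  rcases le_or_gt 0 (g x) with hx | hx
  · rw [abs_of_nonneg hx]
    exact aux1 hαs g hg hM hHolder' htouch x hx
  · have hneg : ContDiff ℝ 1 (fun y => -g y) := hg.neg
    have hfd : ∀ y, fderiv ℝ (fun y => -g y) y = -fderiv ℝ g y := fun y => fderiv_neg
    have hHolder'' : ∀ a b, ‖fderiv ℝ (fun y => -g y) a - fderiv ℝ (fun y => -g y) b‖
        ≤ M * ‖a - b‖ ^ αs := by
      intro a b
      rw [hfd, hfd, neg_sub_neg, norm_sub_rev]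
      exact hHolder' a b
    have htouch'' : ∀ y, (fun y => -g y) y = 0 → fderiv ℝ (fun y => -g y) y = 0 := by
      intro y hy
      rw [hfd, htouch y (by simpa using hy), neg_zero]
    have := aux1 hαs (fun y => -g y) hneg hM hHolder'' htouch'' x (by simpa using hx.le)
    rw [hfd, norm_neg] at this
    rw [abs_of_neg hx]
    simpa using this
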